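/- For even k with n(1-p) ≤ k/2, the maximal probability M(n,k,p) that all n bits equal 1 under a k-wise independent distribution with marginal p satisfies M(n,k,p) ≤ 10·p^n. -/

import Mathlib

open Finset
open scoped Classical

namespace AllOnesAux

lemma ite_iff {c d : Prop} {i1 : Decidable c} {i2 : Decidable d} (h : c ↔ d) (a b : ℝ) :
    @ite _ c i1 a b = @ite _ d i2 a b := by
  by_cases hc : c
  · rw [if_pos hc, if_pos (h.mp hc)]
  · rw [if_neg hc, if_neg (fun hd => hc (h.mpr hd))]

lemma sum_filter_inst_irrel {α : Type*} [Fintype α] (pc : α → Prop)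
    (i1 i2 : DecidablePred pc) (f : α → ℝ) :
    ∑ x ∈ @Finset.filter α pc i1 Finset.univ, f x
      = ∑ x ∈ @Finset.filter α pc i2 Finset.univ, f x := by
  cases (funext fun a => Subsingleton.elim (i1 a) (i2 a) : i1 = i2)
  rfl

noncomputable def bb (n : ℕ) (q : ℝ) (j : ℕ) : ℝ :=
  (n.choose j : ℝ) * q ^ j * (1 - q) ^ (n - j)

lemma bb_nonneg {n : ℕ} {q : ℝ} (hq0 : 0 ≤ q) (hq1 : q ≤ 1) (j : ℕ) :
    0 ≤ bb n q j := by
  have h1 : (0:ℝ) ≤ 1 - q := by linarith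
  unfold bb
  positivity

lemma bb_rec {n : ℕ} (q : ℝ) (m : ℕ) (hm : m < n) :
    bb n q (m+1) * ((1-q) * ((m:ℝ)+1)) = bb n q m * (q * ((n:ℝ) - (m:ℝ))) := by
  have h1 : ((n.choose (m+1) : ℝ)) * ((m:ℝ)+1) = (n.choose m : ℝ) * ((n:ℝ) - (m:ℝ)) := by
    have h := Nat.choose_succ_right_eq n m
    have h' : ((n.choose (m+1) : ℝ)) * (((m:ℕ):ℝ)+1) = (n.choose m : ℝ) * (((n - m : ℕ)):ℝ) := by
      exact_mod_cast h
    rw [Nat.cast_sub hm.le] at h'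
    linarith
  have h2 : (1-q)^(n-(m+1)) * (1-q) = (1-q)^(n-m) := by
    rw [← pow_succ]
    congr 1
    omega
  have lhs : bb n q (m+1) * ((1-q) * ((m:ℝ)+1))
      = ((n.choose (m+1) : ℝ) * ((m:ℝ)+1)) * q^(m+1) * ((1-q)^(n-(m+1)) * (1-q)) := by
    unfold bb; ring
  rw [lhs, h1, h2]
  unfold bb
  rw [pow_succ]
  ring

lemma step_up {n K : ℕ} {q : ℝ} (hq0 : 0 ≤ q) (hq1 : q < 1) (hnq : (n:ℝ)*q ≤ K)
    (m : ℕ) (hKm : K ≤ m) (hmn : m < n) {B : ℝ} (hB : 0 ≤ B)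
    (h : bb n q m ≤ B) : bb n q (m+1) ≤ B := by
  have hrec := bb_rec (n := n) q m hmn
  have hmn' : (m:ℝ) < n := by exact_mod_cast hmn
  have hKm' : (K:ℝ) ≤ m := by exact_mod_cast hKm
  have hd : (0:ℝ) < (1-q) * ((m:ℝ)+1) := by
    have : (0:ℝ) < 1 - q := by linarith
    positivity
  have hfac0 : (0:ℝ) ≤ q * ((n:ℝ) - m) := by
    apply mul_nonneg hq0; linarith
  have hfac : q * ((n:ℝ) - m) ≤ (1-q) * ((m:ℝ)+1) := by
    nlinarith [mul_le_mul_of_nonneg_left hKm' hq0]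
  have chain : bb n q (m+1) * ((1-q) * ((m:ℝ)+1)) ≤ B * ((1-q) * ((m:ℝ)+1)) := by
    calc bb n q (m+1) * ((1-q) * ((m:ℝ)+1)) = bb n q m * (q * ((n:ℝ) - m)) := hrec
      _ ≤ B * (q * ((n:ℝ) - m)) := mul_le_mul_of_nonneg_right h hfac0
      _ ≤ B * ((1-q) * ((m:ℝ)+1)) := mul_le_mul_of_nonneg_left hfac hB
  exact le_of_mul_le_mul_right chain hd

lemma step_jump {n : ℕ} {q : ℝ} (hq0 : 0 ≤ q) (hq1 : q < 1)
    (m u : ℕ) (hmn : m < n) (hun : u < n)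
    (key : (q * ((n:ℝ) - m)) * (q * ((n:ℝ) - u))
        ≤ ((1-q) * ((m:ℝ)+1)) * ((1-q) * ((u:ℝ)+1)))
    (h : bb n q m ≤ bb n q (u+1)) : bb n q (m+1) ≤ bb n q u := by
  have E1 := bb_rec (n := n) q m hmn
  have E2 := bb_rec (n := n) q u hun
  have hmn' : (m:ℝ) < n := by exact_mod_cast hmn
  have hun' : (u:ℝ) < n := by exact_mod_cast hun
  have h1q : (0:ℝ) < 1 - q := by linarith
  have a1 : (0:ℝ) ≤ q * ((n:ℝ) - m) := by apply mul_nonneg hq0; linarith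
  have a2 : (0:ℝ) ≤ q * ((n:ℝ) - u) := by apply mul_nonneg hq0; linarith
  have hbu : 0 ≤ bb n q u := bb_nonneg hq0 hq1.le u
  have D1 : (0:ℝ) < (1-q) * ((m:ℝ)+1) := by positivity
  have D2 : (0:ℝ) < (1-q) * ((u:ℝ)+1) := by positivity
  have chain : bb n q (m+1) * ((1-q) * ((m:ℝ)+1)) * ((1-q) * ((u:ℝ)+1))
      ≤ bb n q u * ((1-q) * ((m:ℝ)+1)) * ((1-q) * ((u:ℝ)+1)) := by
    calc bb n q (m+1) * ((1-q) * ((m:ℝ)+1)) * ((1-q) * ((u:ℝ)+1))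
        = (bb n q m * (q * ((n:ℝ) - m))) * ((1-q) * ((u:ℝ)+1)) := by rw [E1]
      _ ≤ (bb n q (u+1) * (q * ((n:ℝ) - m))) * ((1-q) * ((u:ℝ)+1)) := by
          apply mul_le_mul_of_nonneg_right _ D2.le
          exact mul_le_mul_of_nonneg_right h a1
      _ = (bb n q (u+1) * ((1-q) * ((u:ℝ)+1))) * (q * ((n:ℝ) - m)) := by ring
      _ = (bb n q u * (q * ((n:ℝ) - u))) * (q * ((n:ℝ) - m)) := by rw [E2]
      _ = bb n q u * ((q * ((n:ℝ) - m)) * (q * ((n:ℝ) - u))) := by ring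
      _ ≤ bb n q u * (((1-q) * ((m:ℝ)+1)) * ((1-q) * ((u:ℝ)+1))) :=
          mul_le_mul_of_nonneg_left key hbu
      _ = bb n q u * ((1-q) * ((m:ℝ)+1)) * ((1-q) * ((u:ℝ)+1)) := by ring
  exact le_of_mul_le_mul_right (le_of_mul_le_mul_right chain D2) D1

set_option maxHeartbeats 1600000 in
lemma chain_lemma {n K : ℕ} {q : ℝ} (hq0 : 0 ≤ q) (hq2 : q ≤ 1 - q)
    (hnq : (n:ℝ)*q ≤ K) (hK : 1 ≤ K) (hn : 2*K+1 ≤ n) :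
    ∀ i, i < K/2 + 2 → bb n q (K+1+i) ≤ bb n q (K - (i/5+1)) := by
  have hq1 : q < 1 := by linarith
  have hKn : K < n := by omega
  have hKr : (1:ℝ) ≤ (K:ℝ) := by exact_mod_cast hK
  intro i
  induction i with
  | zero =>
    intro _
    -- goal : bb n q (K+1) ≤ bb n q (K-1)
    have hu : K - (0/5+1) = K - 1 := by omega
    rw [hu]
    have hun : K - 1 < n := by omega
    have hu1 : (K:ℝ) - 1 + 1 = (K:ℝ) := by ring
    have hcast : ((K - 1 : ℕ) : ℝ) = (K:ℝ) - 1 := by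
      have : (1:ℕ) ≤ K := hK
      push_cast [Nat.cast_sub this]
      ring
    have hsucc : (K - 1) + 1 = K := by omega
    apply step_jump hq0 hq1 K (K-1) hKn hun
    · rw [hcast, hu1]
      have hnr : q * (n:ℝ) ≤ (K:ℝ) := by
        have := hnq; linarith [hnq, mul_comm (n:ℝ) q]
      have hqK : q * ((n:ℝ) - (K:ℝ)) = q*(n:ℝ) - q*(K:ℝ) := by ring
      have b1 : q * ((n:ℝ) - (K:ℝ)) ≤ (1-q) * (K:ℝ) := by
        rw [hqK]
        have h2 : (1-q) * (K:ℝ) = (K:ℝ) - q*(K:ℝ) := by ring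
        rw [h2]; linarith
      have b2 : q * ((n:ℝ) - ((K:ℝ)-1)) ≤ (1-q) * ((K:ℝ)+1) := by
        have h1 : q * ((n:ℝ) - ((K:ℝ)-1)) = q*(n:ℝ) - q*(K:ℝ) + q := by ring
        have h2 : (1-q) * ((K:ℝ)+1) = (K:ℝ) - q*(K:ℝ) + (1 - q) := by ring
        rw [h1, h2]; linarith
      have a2 : (0:ℝ) ≤ q * ((n:ℝ) - ((K:ℝ)-1)) := by
        have hKn' : (K:ℝ) < (n:ℝ) := by exact_mod_cast hKn
        apply mul_nonneg hq0; linarith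
      have h1q : (0:ℝ) ≤ 1 - q := by linarith
      calc (q * ((n:ℝ) - (K:ℝ))) * (q * ((n:ℝ) - ((K:ℝ)-1)))
          ≤ ((1-q) * (K:ℝ)) * ((1-q) * ((K:ℝ)+1)) := by
            apply mul_le_mul b1 b2 a2
            positivity
        _ = ((1-q) * ((K:ℝ)+1)) * ((1-q) * (K:ℝ)) := by ring
    · rw [hsucc]
  | succ i ih =>
    intro hi
    have hi' : i < K/2 + 2 := by omega
    have IH := ih hi'
    by_cases hbig : n < K+1+(i+1)
    · have hch : n.choose (K+1+(i+1)) = 0 := Nat.choose_eq_zero_of_lt hbig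
      have : bb n q (K+1+(i+1)) = 0 := by unfold bb; rw [hch]; simp
      rw [this]
      exact bb_nonneg hq0 hq1.le _
    · push_neg at hbig
      have hmn : K+1+i < n := by omega
      by_cases hdvd : (5 ∣ (i+1))
      · -- jump step
        obtain ⟨m5, hm5⟩ := hdvd
        have hm51 : 1 ≤ m5 := by omega
        have hdiv1 : i/5 + 1 = m5 := by omega
        have hdiv2 : (i+1)/5 + 1 = m5 + 1 := by omega
        have hbound : 5*m5 ≤ K/2 + 1 := by omega
        have hm5K : m5 + 1 ≤ K := by omega
        have h3K : 5*m5 + 1 ≤ 3*K := by omega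
        set u := K - (m5+1) with hudef
        have huK : u + (m5+1) = K := by omega
        have hgoal_idx : K - ((i+1)/5+1) = u := by omega
        rw [hgoal_idx]
        have hun : u < n := by omega
        have hidx : K+1+(i+1) = (K+1+i)+1 := by omega
        rw [hidx]
        have hu1 : (u:ℝ) + ((m5:ℝ) + 1) = (K:ℝ) := by exact_mod_cast huK
        have hu' : (u:ℝ) = (K:ℝ) - (m5:ℝ) - 1 := by linarith
        have hm5r : (1:ℝ) ≤ (m5:ℝ) := by exact_mod_cast hm51
        have h3Kr : 5*(m5:ℝ) + 1 ≤ 3*(K:ℝ) := by exact_mod_cast h3K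
        have hir : (i:ℝ) + 1 = 5*(m5:ℝ) := by exact_mod_cast hm5
        apply step_jump hq0 hq1 (K+1+i) u hmn hun
        · -- key inequality
          have hnr : q * (n:ℝ) ≤ (K:ℝ) := by linarith [hnq, mul_comm (n:ℝ) q]
          have h1q : (0:ℝ) ≤ 1 - q := by linarith
          have hcastm : ((K+1+i : ℕ) : ℝ) = (K:ℝ) + 1 + (i:ℝ) := by push_cast; ring
          rw [hcastm]
          have hir0 : (0:ℝ) ≤ (i:ℝ) := by positivity
          have hqi : (0:ℝ) ≤ q * ((i:ℝ)+1) := mul_nonneg hq0 (by linarith)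
          have b1 : q * ((n:ℝ) - ((K:ℝ)+1+(i:ℝ))) ≤ (1-q) * (K:ℝ) := by
            have e1 : q * ((n:ℝ) - ((K:ℝ)+1+(i:ℝ))) = q*(n:ℝ) - q*(K:ℝ) - q*((i:ℝ)+1) := by ring
            have e2 : (1-q) * (K:ℝ) = (K:ℝ) - q*(K:ℝ) := by ring
            rw [e1, e2]; linarith
          have hqm5 : q*((m5:ℝ)+1) ≤ (1-q)*((m5:ℝ)+1) :=
            mul_le_mul_of_nonneg_right hq2 (by linarith)
          have b2 : q * ((n:ℝ) - (u:ℝ)) ≤ (1-q) * ((K:ℝ) + (m5:ℝ) + 1) := by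
            have e1 : q * ((n:ℝ) - (u:ℝ)) = q*(n:ℝ) - q*(K:ℝ) + q*((m5:ℝ)+1) := by
              rw [hu']; ring
            have e2 : (1-q) * ((K:ℝ) + (m5:ℝ) + 1) = (K:ℝ) - q*(K:ℝ) + (1-q)*((m5:ℝ)+1) := by
              ring
            rw [e1, e2]; linarith
          have hKK : (K:ℝ) * ((K:ℝ) + (m5:ℝ) + 1) ≤ ((K:ℝ)+1+(i:ℝ)+1) * ((u:ℝ)+1) := by
            have e3 : ((K:ℝ)+1+(i:ℝ)+1) * ((u:ℝ)+1)
                = ((K:ℝ)+1+5*(m5:ℝ)) * ((K:ℝ)-(m5:ℝ)) := by rw [hu']; rw [show (i:ℝ) = 5*(m5:ℝ) - 1 by linarith]; ring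
            rw [e3]
            have hprod : (0:ℝ) ≤ (m5:ℝ) * (3*(K:ℝ) - 5*(m5:ℝ) - 1) :=
              mul_nonneg (by linarith) (by linarith)
            nlinarith [hprod]
          have b3 : ((1-q) * (K:ℝ)) * ((1-q) * ((K:ℝ) + (m5:ℝ) + 1))
              ≤ ((1-q) * ((K:ℝ)+1+(i:ℝ)+1)) * ((1-q) * ((u:ℝ)+1)) := by
            have hsq : (0:ℝ) ≤ (1-q)*(1-q) := mul_nonneg h1q h1q
            calc ((1-q) * (K:ℝ)) * ((1-q) * ((K:ℝ) + (m5:ℝ) + 1))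
                = ((1-q)*(1-q)) * ((K:ℝ) * ((K:ℝ) + (m5:ℝ) + 1)) := by ring
              _ ≤ ((1-q)*(1-q)) * (((K:ℝ)+1+(i:ℝ)+1) * ((u:ℝ)+1)) :=
                  mul_le_mul_of_nonneg_left hKK hsq
              _ = ((1-q) * ((K:ℝ)+1+(i:ℝ)+1)) * ((1-q) * ((u:ℝ)+1)) := by ring
          have a1' : (0:ℝ) ≤ q * ((n:ℝ) - ((K:ℝ)+1+(i:ℝ))) := by
            apply mul_nonneg hq0
            have : ((K+1+i:ℕ):ℝ) < (n:ℝ) := by exact_mod_cast hmn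
            rw [hcastm] at this; linarith
          have a2' : (0:ℝ) ≤ q * ((n:ℝ) - (u:ℝ)) := by
            apply mul_nonneg hq0
            have : ((u:ℕ):ℝ) < (n:ℝ) := by exact_mod_cast hun
            linarith
          calc (q * ((n:ℝ) - ((K:ℝ)+1+(i:ℝ)))) * (q * ((n:ℝ) - (u:ℝ)))
              ≤ ((1-q) * (K:ℝ)) * ((1-q) * ((K:ℝ) + (m5:ℝ) + 1)) := by
                apply mul_le_mul b1 b2 a2'
                positivity
            _ ≤ ((1-q) * ((K:ℝ)+1+(i:ℝ)+1)) * ((1-q) * ((u:ℝ)+1)) := b3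
        · -- bb n q (K+1+i) ≤ bb n q (u+1)
          have : K - (i/5+1) = u + 1 := by omega
          rw [this] at IH
          exact IH
      · -- easy step
        have hdiv : (i+1)/5 = i/5 := by omega
        rw [hdiv]
        have hidx : K+1+(i+1) = (K+1+i)+1 := by omega
        rw [hidx]
        exact step_up hq0 hq1 hnq (K+1+i) (by omega) hmn
          (bb_nonneg hq0 hq1.le _) IH


lemma group5 (f : ℕ → ℝ) : ∀ M : ℕ, ∑ i ∈ range (5*M), f (i/5) = 5 * ∑ a ∈ range M, f a := by
  intro M
  induction M with
  | zero => simp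
  | succ M ih =>
    have h5 : 5*(M+1) = 5*M+1+1+1+1+1 := by ring
    rw [h5, sum_range_succ, sum_range_succ, sum_range_succ, sum_range_succ, sum_range_succ, ih,
      sum_range_succ]
    rw [show (5*M)/5 = M by omega, show (5*M+1)/5 = M by omega, show (5*M+1+1)/5 = M by omega,
      show (5*M+1+1+1)/5 = M by omega, show (5*M+1+1+1+1)/5 = M by omega]
    ring

lemma sum_bb_one {n : ℕ} (q : ℝ) : ∑ j ∈ range (n+1), bb n q j = 1 := by
  have h := add_pow q (1-q) n
  have h1 : (q + (1-q)) = (1:ℝ) := by ring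
  rw [h1, one_pow] at h
  calc ∑ j ∈ range (n+1), bb n q j
      = ∑ j ∈ range (n+1), q ^ j * (1-q) ^ (n-j) * (n.choose j : ℝ) := by
        apply sum_congr rfl
        intro j _
        unfold bb
        ring
    _ = 1 := h.symm

lemma sum_bb_two {n : ℕ} (q : ℝ) : ∑ j ∈ range (n+1), bb n q j * 2^j = (1+q)^n := by
  have h := add_pow (2*q) (1-q) n
  have h1 : (2*q + (1-q)) = (1+q : ℝ) := by ring
  rw [h1] at h
  calc ∑ j ∈ range (n+1), bb n q j * 2^j
      = ∑ j ∈ range (n+1), (2*q) ^ j * (1-q) ^ (n-j) * (n.choose j : ℝ) := by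
        apply sum_congr rfl
        intro j _
        unfold bb
        rw [mul_pow]
        ring
    _ = (1+q)^n := h.symm

lemma far_le {n K : ℕ} {q : ℝ} (hq0 : 0 ≤ q) (hq2 : q ≤ 1 - q) (hnq : (n:ℝ)*q ≤ K) :
    ∑ j ∈ Ico (K+1+(K/2+2)) (n+1), bb n q j ≤ 1/4 := by
  have hq1 : q ≤ 1 := by linarith
  set A := K+1+(K/2+2) with hA
  have step1 : ∑ j ∈ Ico A (n+1), bb n q j
      ≤ ∑ j ∈ Ico A (n+1), (bb n q j * 2^j) * ((1/2:ℝ))^A := by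
    apply sum_le_sum
    intro j hj
    have hjA : A ≤ j := (mem_Ico.mp hj).1
    have h2 : (1:ℝ) ≤ 2^j * (1/2:ℝ)^A := by
      have e : (2:ℝ)^j * (1/2:ℝ)^A = 2^j / 2^A := by
        rw [div_pow, one_pow]
        ring
      rw [e, le_div_iff₀ (by positivity), one_mul]
      exact pow_le_pow_right₀ one_le_two hjA
    have hbb := bb_nonneg (n := n) hq0 hq1 j
    calc bb n q j = bb n q j * 1 := by ring
      _ ≤ bb n q j * (2^j * (1/2:ℝ)^A) := mul_le_mul_of_nonneg_left h2 hbb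
      _ = (bb n q j * 2^j) * ((1/2:ℝ))^A := by ring
  have step2 : ∑ j ∈ Ico A (n+1), (bb n q j * 2^j) * ((1/2:ℝ))^A
      ≤ (∑ j ∈ range (n+1), bb n q j * 2^j) * ((1/2:ℝ))^A := by
    rw [← sum_mul]
    apply mul_le_mul_of_nonneg_right _ (by positivity)
    apply sum_le_sum_of_subset_of_nonneg
    · rw [range_eq_Ico]
      exact Ico_subset_Ico (Nat.zero_le _) le_rfl
    · intro j _ _
      have hbb := bb_nonneg (n := n) hq0 hq1 j
      positivity
  have step3 : (∑ j ∈ range (n+1), bb n q j * 2^j) * ((1/2:ℝ))^A = (1+q)^n * ((1/2:ℝ))^A := by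
    rw [sum_bb_two]
  have step4 : (1+q)^n ≤ Real.exp 1 ^ K := by
    have e1 : (1+q)^n ≤ (Real.exp q)^n := by
      apply pow_le_pow_left₀ (by linarith)
      linarith [Real.add_one_le_exp q]
    have e2 : (Real.exp q)^n = Real.exp ((n:ℝ)*q) := by
      rw [← Real.exp_nat_mul]
    have e3 : Real.exp ((n:ℝ)*q) ≤ Real.exp (K:ℝ) := Real.exp_le_exp.mpr hnq
    have e4 : Real.exp (K:ℝ) = Real.exp 1 ^ K := by
      rw [← Real.exp_nat_mul]
      norm_num
    calc (1+q)^n ≤ (Real.exp q)^n := e1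
      _ = Real.exp ((n:ℝ)*q) := e2
      _ ≤ Real.exp (K:ℝ) := e3
      _ = Real.exp 1 ^ K := e4
  have step5 : Real.exp 1 ^ K * ((1/2:ℝ))^A ≤ 1/4 := by
    have hE : (0:ℝ) < Real.exp 1 := Real.exp_pos 1
    have key : 4 * Real.exp 1 ^ K ≤ 2^A := by
      have hsq : (4 * Real.exp 1 ^ K)^2 ≤ ((2:ℝ)^A)^2 := by
        have h8 : (Real.exp 1)^2 ≤ 8 := by
          nlinarith [Real.exp_one_lt_d9, Real.exp_pos 1]
        have l1 : (4 * Real.exp 1 ^ K)^2 = 16 * ((Real.exp 1 ^ 2)^K) := by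
          rw [← pow_mul, mul_comm 2 K, pow_mul]
          ring
        have l2 : ((Real.exp 1 ^ 2)^K) ≤ (8:ℝ)^K :=
          pow_le_pow_left₀ (by positivity) h8 K
        have l3 : ((2:ℝ)^A)^2 = 2^(2*A) := by rw [← pow_mul, mul_comm]
        have l4 : (2:ℝ)^(3*K+5) ≤ 2^(2*A) := by
          apply pow_le_pow_right₀ one_le_two
          omega
        have l5 : (2:ℝ)^(3*K+5) = 32 * (8:ℝ)^K := by
          rw [pow_add, pow_mul]
          norm_num
          ring
        rw [l1, l3]
        calc 16 * ((Real.exp 1 ^ 2)^K) ≤ 16 * (8:ℝ)^K := by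
              apply mul_le_mul_of_nonneg_left l2; norm_num
          _ ≤ 32 * (8:ℝ)^K := by
              apply mul_le_mul_of_nonneg_right _ (by positivity); norm_num
          _ = 2^(3*K+5) := l5.symm
          _ ≤ 2^(2*A) := l4
      have h4E : (0:ℝ) ≤ 4 * Real.exp 1 ^ K := by positivity
      have h2A : (0:ℝ) ≤ 2^A := by positivity
      exact le_of_pow_le_pow_left₀ (by norm_num) h2A hsq
    have e : Real.exp 1 ^ K * ((1/2:ℝ))^A = Real.exp 1 ^ K / 2^A := by
      rw [div_pow, one_pow]
      ring
    rw [e, div_le_div_iff₀ (by positivity) (by norm_num : (0:ℝ) < 4)]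
    linarith
  calc ∑ j ∈ Ico A (n+1), bb n q j
      ≤ ∑ j ∈ Ico A (n+1), (bb n q j * 2^j) * ((1/2:ℝ))^A := step1
    _ ≤ (∑ j ∈ range (n+1), bb n q j * 2^j) * ((1/2:ℝ))^A := step2
    _ = (1+q)^n * ((1/2:ℝ))^A := step3
    _ ≤ Real.exp 1 ^ K * ((1/2:ℝ))^A := by
        apply mul_le_mul_of_nonneg_right step4 (by positivity)
    _ ≤ 1/4 := step5

theorem bin_lower (n K : ℕ) (q : ℝ) (hq0 : 0 ≤ q) (hq2 : q ≤ 1 - q)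
    (hnq : (n:ℝ)*q ≤ K) (hK : 1 ≤ K) (hn : 2*K+1 ≤ n) :
    (1/8 : ℝ) ≤ ∑ j ∈ range (K+1), bb n q j := by
  have hq1 : q ≤ 1 := by linarith
  set H := ∑ j ∈ range (K+1), bb n q j with hH
  set Mid := ∑ i ∈ range (K/2+2), bb n q (K+1+i) with hMid
  have hH0 : 0 ≤ H := sum_nonneg fun j _ => bb_nonneg hq0 hq1 j
  -- Mid ≤ 5 H
  have hmid5 : Mid ≤ 5 * H := by
    have c1 : Mid ≤ ∑ i ∈ range (K/2+2), bb n q (K - (i/5+1)) := by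
      apply sum_le_sum
      intro i hi
      exact chain_lemma hq0 hq2 hnq hK hn i (mem_range.mp hi)
    have c2 : ∑ i ∈ range (K/2+2), bb n q (K - (i/5+1))
        ≤ ∑ i ∈ range (5*K), bb n q (K - (i/5+1)) := by
      apply sum_le_sum_of_subset_of_nonneg
      · apply range_subset_range.mpr
        omega
      · intro j _ _
        exact bb_nonneg hq0 hq1 _
    have c3 : ∑ i ∈ range (5*K), bb n q (K - (i/5+1))
        = 5 * ∑ a ∈ range K, bb n q (K - (a+1)) := group5 (fun a => bb n q (K - (a+1))) K
    have c4 : ∑ a ∈ range K, bb n q (K - (a+1)) = ∑ j ∈ range K, bb n q j := by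
      have := sum_range_reflect (fun j => bb n q j) K
      rw [← this]
      apply sum_congr rfl
      intro a ha
      congr 1
      have := mem_range.mp ha
      omega
    have c5 : ∑ j ∈ range K, bb n q j ≤ H := by
      rw [hH]
      apply sum_le_sum_of_subset_of_nonneg
      · exact range_subset_range.mpr (by omega)
      · intro j _ _
        exact bb_nonneg hq0 hq1 _
    calc Mid ≤ ∑ i ∈ range (K/2+2), bb n q (K - (i/5+1)) := c1
      _ ≤ ∑ i ∈ range (5*K), bb n q (K - (i/5+1)) := c2
      _ = 5 * ∑ a ∈ range K, bb n q (K - (a+1)) := c3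
      _ = 5 * ∑ j ∈ range K, bb n q j := by rw [c4]
      _ ≤ 5 * H := by linarith [c5]
  -- decomposition
  have htot : ∑ j ∈ range (n+1), bb n q j = 1 := sum_bb_one q
  have hsplit : (1:ℝ) ≤ H + Mid + 1/4 := by
    have hfar := far_le (n := n) (K := K) hq0 hq2 hnq
    set A := K+1+(K/2+2) with hA
    have hsp1 : ∑ j ∈ range (n+1), bb n q j
        = H + ∑ j ∈ Ico (K+1) (n+1), bb n q j := by
      rw [hH, range_eq_Ico, range_eq_Ico]
      exact (sum_Ico_consecutive (fun j => bb n q j) (Nat.zero_le (K+1))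
        (by omega : K+1 ≤ n+1)).symm
    have hsp2 : ∑ j ∈ Ico (K+1) (n+1), bb n q j ≤ Mid + 1/4 := by
      by_cases hcase : A ≤ n+1
      · have e : ∑ j ∈ Ico (K+1) (n+1), bb n q j
            = ∑ j ∈ Ico (K+1) A, bb n q j + ∑ j ∈ Ico A (n+1), bb n q j := by
          rw [← sum_Ico_consecutive (fun j => bb n q j) (by omega : K+1 ≤ A) hcase]
        have e2 : ∑ j ∈ Ico (K+1) A, bb n q j = Mid := by
          rw [hMid, sum_Ico_eq_sum_range, show A - (K+1) = K/2+2 from by omega]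
        rw [e, e2]
        linarith [hfar]
      · have e : ∑ j ∈ Ico (K+1) (n+1), bb n q j ≤ ∑ j ∈ Ico (K+1) A, bb n q j := by
          apply sum_le_sum_of_subset_of_nonneg
          · exact Ico_subset_Ico le_rfl (by omega)
          · intro j _ _
            exact bb_nonneg hq0 hq1 _
        have e2 : ∑ j ∈ Ico (K+1) A, bb n q j = Mid := by
          rw [hMid, sum_Ico_eq_sum_range, show A - (K+1) = K/2+2 from by omega]
        calc ∑ j ∈ Ico (K+1) (n+1), bb n q j ≤ ∑ j ∈ Ico (K+1) A, bb n q j := e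
          _ = Mid := e2
          _ ≤ Mid + 1/4 := by norm_num
    calc (1:ℝ) = ∑ j ∈ range (n+1), bb n q j := htot.symm
      _ = H + ∑ j ∈ Ico (K+1) (n+1), bb n q j := hsp1
      _ ≤ H + (Mid + 1/4) := by linarith [hsp2]
      _ = H + Mid + 1/4 := by ring
  linarith



variable {n k : ℕ} {p : ℝ} {Q : (Fin n → Bool) → ℝ}

/-- Expectation of a product over a small set of coordinates factorizes. -/
lemma prod_expectation
    (hQk : ∀ S : Finset (Fin n), S.card ≤ k → ∀ b : Fin n → Bool,
      (∑ x ∈ univ.filter (fun x => ∀ i ∈ S, x i = b i), Q x)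
        = ∏ i ∈ S, (if b i then p else 1 - p))
    (U : Finset (Fin n)) (hU : U.card ≤ k) (g : Fin n → Bool → ℝ) :
    ∑ x : Fin n → Bool, Q x * ∏ i ∈ U, g i (x i)
      = ∏ i ∈ U, (p * g i true + (1-p) * g i false) := by
  have expand : ∀ x : Fin n → Bool, ∏ i ∈ U, g i (x i)
      = ∑ V ∈ U.powerset, ((∏ i ∈ V, (g i true - g i false)) * (∏ i ∈ U \ V, g i false))
          * (if ∀ i ∈ V, x i = true then 1 else 0) := by
    intro x
    have h1 : ∀ i ∈ U, g i (x i)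
        = (g i true - g i false) * (if x i = true then 1 else 0) + g i false := by
      intro i _
      cases hx : x i <;> simp
    rw [prod_congr rfl h1, prod_add]
    apply sum_congr rfl
    intro V _
    rw [prod_mul_distrib, prod_boole]
    ring
  calc ∑ x : Fin n → Bool, Q x * ∏ i ∈ U, g i (x i)
      = ∑ x : Fin n → Bool, ∑ V ∈ U.powerset,
          ((∏ i ∈ V, (g i true - g i false)) * (∏ i ∈ U \ V, g i false))
          * (Q x * (if ∀ i ∈ V, x i = true then 1 else 0)) := by
        apply sum_congr rfl
        intro x _
        rw [expand x, mul_sum]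
        apply sum_congr rfl
        intro V _
        ring
    _ = ∑ V ∈ U.powerset, ((∏ i ∈ V, (g i true - g i false)) * (∏ i ∈ U \ V, g i false))
          * (∑ x : Fin n → Bool, Q x * (if ∀ i ∈ V, x i = true then 1 else 0)) := by
        rw [sum_comm]
        apply sum_congr rfl
        intro V _
        rw [mul_sum]
    _ = ∑ V ∈ U.powerset, ((∏ i ∈ V, (g i true - g i false)) * (∏ i ∈ U \ V, g i false))
          * p ^ V.card := by
        apply sum_congr rfl
        intro V hV
        congr 1
        have hVk : V.card ≤ k := le_trans (card_le_card (mem_powerset.mp hV)) hU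
        have hfil := hQk V hVk (fun _ => true)
        have heq : ∑ x : Fin n → Bool, Q x * (if ∀ i ∈ V, x i = true then 1 else 0)
            = ∑ x ∈ univ.filter (fun x => ∀ i ∈ V, x i = (fun _ => true) i), Q x := by
          rw [sum_filter]
          apply sum_congr rfl
          intro x _
          by_cases hx : ∀ i ∈ V, x i = true <;> simp [hx]
        rw [heq, hfil]
        simp
    _ = ∑ V ∈ U.powerset, (∏ i ∈ V, ((g i true - g i false) * p)) * (∏ i ∈ U \ V, g i false) := by
        apply sum_congr rfl
        intro V _
        rw [prod_mul_distrib, prod_const]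
        ring
    _ = ∏ i ∈ U, ((g i true - g i false) * p + g i false) := (prod_add _ _ _).symm
    _ = ∏ i ∈ U, (p * g i true + (1-p) * g i false) := by
        apply prod_congr rfl
        intro i _
        ring


def indR (b : Bool) : ℝ := if b then 1 else 0

noncomputable def WW (p : ℝ) (S : Finset (Fin n)) (x : Fin n → Bool) : ℝ :=
  ∏ i ∈ S, (indR (x i) - p)

lemma WW_mul (p : ℝ) (S T : Finset (Fin n)) (x : Fin n → Bool) :
    WW p S x * WW p T x = ∏ i ∈ S ∪ T,
      ((if i ∈ S then indR (x i) - p else 1) * (if i ∈ T then indR (x i) - p else 1)) := by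
  rw [prod_mul_distrib, prod_ite_mem, prod_ite_mem, union_inter_cancel_left,
    union_inter_cancel_right]
  rfl

lemma orth (hp0 : 0 ≤ p) (hkK : 2*(k/2) ≤ k)
    (hQk : ∀ S : Finset (Fin n), S.card ≤ k → ∀ b : Fin n → Bool,
      (∑ x ∈ univ.filter (fun x => ∀ i ∈ S, x i = b i), Q x)
        = ∏ i ∈ S, (if b i then p else 1 - p))
    (S T : Finset (Fin n)) (hS : S.card ≤ k/2) (hT : T.card ≤ k/2) :
    ∑ x : Fin n → Bool, Q x * (WW p S x * WW p T x)
      = if S = T then (p*(1-p)) ^ S.card else 0 := by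
  have hU : (S ∪ T).card ≤ k := by
    calc (S ∪ T).card ≤ S.card + T.card := card_union_le S T
      _ ≤ k/2 + k/2 := Nat.add_le_add hS hT
      _ ≤ k := by omega
  have hexp : ∑ x : Fin n → Bool, Q x * (WW p S x * WW p T x)
      = ∏ i ∈ S ∪ T, (p * ((if i ∈ S then indR true - p else 1) * (if i ∈ T then indR true - p else 1))
          + (1-p) * ((if i ∈ S then indR false - p else 1) * (if i ∈ T then indR false - p else 1))) := by
    have := prod_expectation hQk (S ∪ T) hU
      (fun i b => (if i ∈ S then indR b - p else 1) * (if i ∈ T then indR b - p else 1))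
    rw [← this]
    apply sum_congr rfl
    intro x _
    rw [WW_mul]
  rw [hexp]
  by_cases hST : S = T
  · subst hST
    rw [if_pos rfl, union_self]
    calc ∏ i ∈ S, (p * ((if i ∈ S then indR true - p else 1) * (if i ∈ S then indR true - p else 1))
          + (1-p) * ((if i ∈ S then indR false - p else 1) * (if i ∈ S then indR false - p else 1)))
        = ∏ _i ∈ S, (p*(1-p)) := by
          apply prod_congr rfl
          intro i hi
          rw [if_pos hi, if_pos hi]
          simp only [indR, Bool.false_eq_true, if_false, if_true]
          ring
      _ = (p*(1-p)) ^ S.card := prod_const _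
  · rw [if_neg hST]
    have hex : ∃ i ∈ S ∪ T, (i ∈ S ∧ i ∉ T) ∨ (i ∈ T ∧ i ∉ S) := by
      by_contra hcon
      push_neg at hcon
      apply hST
      ext i
      constructor
      · intro hiS
        by_contra hiT
        exact hiT ((hcon i (mem_union_left _ hiS)).1 hiS)
      · intro hiT
        by_contra hiS
        exact hiS ((hcon i (mem_union_right _ hiT)).2 hiT)
    obtain ⟨i, hiU, hcase⟩ := hex
    apply prod_eq_zero hiU
    rcases hcase with ⟨h1, h2⟩ | ⟨h1, h2⟩
    · rw [if_pos h1, if_neg h2, if_pos h1, if_neg h2]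
      simp only [indR, Bool.false_eq_true, if_false, if_true]
      ring
    · rw [if_neg h2, if_pos h1, if_neg h2, if_pos h1]
      simp only [indR, Bool.false_eq_true, if_false, if_true]
      ring


end AllOnesAux

/-- `Q` is a `k`-wise independent distribution on bits indexed by `ι`,
with each bit equal to `true` with probability `p`. -/
def kwise {ι : Type} [Fintype ι] [DecidableEq ι] (k : ℕ) (p : ℝ)
    (Q : (ι → Bool) → ℝ) : Prop :=
  (∀ x, 0 ≤ Q x) ∧ (∑ x, Q x = 1) ∧
  ∀ S : Finset ι, S.card ≤ k → ∀ b : ι → Bool,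
    (∑ x ∈ univ.filter (fun x => ∀ i ∈ S, x i = b i), Q x)
      = ∏ i ∈ S, (if b i then p else 1 - p)

/-- Probability of the event `E` under the distribution `Q`. -/
noncomputable def pr {ι : Type} [Fintype ι] [DecidableEq ι]
    (Q : (ι → Bool) → ℝ) (E : (ι → Bool) → Prop) : ℝ :=
  ∑ x, if E x then Q x else 0

/-- Number of bits equal to `true`. -/
def cnt {ι : Type} [Fintype ι] [DecidableEq ι] (x : ι → Bool) : ℕ :=
  (univ.filter (fun i => x i = true)).card

set_option maxHeartbeats 1600000 in
theorem AllOnesAux.main_hard (n K : ℕ) (p q : ℝ) (hq : q = 1 - p) (hp2 : 0 < p)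
    (hq0 : 0 ≤ q) (hq2 : q ≤ 1 - q) (hnq : (n:ℝ) * q ≤ (K:ℝ))
    (hK1 : 1 ≤ K) (hn2 : 2*K + 1 ≤ n)
    (Q : (Fin n → Bool) → ℝ) (hQ0 : ∀ x, 0 ≤ Q x)
    (hQk : ∀ S : Finset (Fin n), S.card ≤ 2*K → ∀ b : Fin n → Bool,
      (∑ x ∈ univ.filter (fun x => ∀ i ∈ S, x i = b i), Q x)
        = ∏ i ∈ S, (if b i then p else 1 - p)) :
    Q (fun _ => true) ≤ 10 * p ^ n := by
  have hp0 : 0 ≤ p := hp2.le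
  have hpn0 : (0:ℝ) ≤ p ^ n := by positivity
  have hdiv : 2*K/2 = K := by omega
  set 𝒮 : Finset (Finset (Fin n)) :=
    (univ : Finset (Fin n)).powerset.filter (fun S => S.card ≤ K) with h𝒮
  set A : ℝ := ∑ S ∈ 𝒮, (q/p) ^ S.card with hAdef
  have hqp0 : 0 ≤ q/p := div_nonneg hq0 hp0
  have hA1 : (1:ℝ) ≤ A := by
    rw [hAdef]
    have hmem : (∅ : Finset (Fin n)) ∈ 𝒮 := by
      rw [h𝒮]
      simp
    have := single_le_sum (f := fun S : Finset (Fin n) => (q/p) ^ S.card)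
      (fun S _ => by positivity) hmem
    simpa using this
  have hA0 : (0:ℝ) < A := lt_of_lt_of_le one_pos hA1
  set L : (Fin n → Bool) → ℝ := fun x => ∑ S ∈ 𝒮, (1/p) ^ S.card * WW p S x with hLdef
  have hL1 : L (fun _ => true) = A := by
    rw [hLdef, hAdef]
    apply sum_congr rfl
    intro S _
    have hWone : WW p S (fun _ => true) = q ^ S.card := by
      unfold WW
      rw [show (fun (i : Fin n) => indR ((fun (_ : Fin n) => true) i) - p) = fun _ => q from ?_]
      · exact prod_const q
      · funext i
        simp [indR, hq]
    rw [hWone, ← mul_pow]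
    congr 1
    field_simp
  have hcard𝒮 : ∀ S ∈ 𝒮, S.card ≤ K := by
    intro S hS
    rw [h𝒮] at hS
    exact (mem_filter.mp hS).2
  have hcard𝒮' : ∀ S ∈ 𝒮, S.card ≤ 2*K/2 := by
    intro S hS
    rw [hdiv]
    exact hcard𝒮 S hS
  have hEL2 : ∑ x : Fin n → Bool, Q x * (L x)^2 = A := by
    have step1 : ∀ x : Fin n → Bool, Q x * (L x)^2
        = ∑ S ∈ 𝒮, ∑ T ∈ 𝒮, ((1/p) ^ S.card * (1/p) ^ T.card)
            * (Q x * (WW p S x * WW p T x)) := by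
      intro x
      rw [hLdef]
      rw [sq, sum_mul_sum]
      rw [mul_sum]
      apply sum_congr rfl
      intro S _
      rw [mul_sum]
      apply sum_congr rfl
      intro T _
      ring
    calc ∑ x : Fin n → Bool, Q x * (L x)^2
        = ∑ x : Fin n → Bool, ∑ S ∈ 𝒮, ∑ T ∈ 𝒮, ((1/p) ^ S.card * (1/p) ^ T.card)
            * (Q x * (WW p S x * WW p T x)) := by
          apply sum_congr rfl
          intro x _
          exact step1 x
      _ = ∑ S ∈ 𝒮, ∑ T ∈ 𝒮, ((1/p) ^ S.card * (1/p) ^ T.card)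
            * (∑ x : Fin n → Bool, Q x * (WW p S x * WW p T x)) := by
          rw [sum_comm]
          apply sum_congr rfl
          intro S _
          rw [sum_comm]
          apply sum_congr rfl
          intro T _
          rw [mul_sum]
      _ = ∑ S ∈ 𝒮, ∑ T ∈ 𝒮, (if S = T then
            ((1/p) ^ S.card * (1/p) ^ T.card) * (p*(1-p)) ^ S.card else 0) := by
          apply sum_congr rfl
          intro S hS
          apply sum_congr rfl
          intro T hT
          rw [orth hp0 (by omega) hQk S T (hcard𝒮' S hS) (hcard𝒮' T hT)]
          by_cases hST : S = T
          · rw [if_pos hST, if_pos hST]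
          · rw [if_neg hST, if_neg hST, mul_zero]
      _ = ∑ S ∈ 𝒮, ((1/p) ^ S.card * (1/p) ^ S.card) * (p*(1-p)) ^ S.card := by
          apply sum_congr rfl
          intro S hS
          rw [sum_ite_eq 𝒮 S (fun T => ((1/p) ^ S.card * (1/p) ^ T.card) * (p*(1-p)) ^ S.card)]
          rw [if_pos hS]
      _ = A := by
          rw [hAdef]
          apply sum_congr rfl
          intro S _
          rw [← mul_pow, ← mul_pow]
          congr 1
          rw [← hq]
          field_simp
  -- key inequality
  have hkey : Q (fun _ => true) * A^2 ≤ A := by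
    have hsingle : Q (fun _ => true) * (L (fun _ => true))^2
        ≤ ∑ x : Fin n → Bool, Q x * (L x)^2 :=
      single_le_sum (f := fun x => Q x * (L x)^2)
        (fun x _ => mul_nonneg (hQ0 x) (sq_nonneg _)) (mem_univ _)
    rw [hL1] at hsingle
    rw [hEL2] at hsingle
    exact hsingle
  have hQle : Q (fun _ => true) ≤ 1/A := by
    rw [le_div_iff₀ hA0]
    nlinarith [hkey, hA0, hA1]
  -- A * p^n equals the binomial sum
  have hKn : K ≤ n := by omega
  have hAH : A * p ^ n = ∑ j ∈ range (K+1), bb n q j := by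
    have e1 : A * p ^ n = ∑ S ∈ 𝒮, q ^ S.card * p ^ (n - S.card) := by
      rw [hAdef, sum_mul]
      apply sum_congr rfl
      intro S hS
      have hc : S.card ≤ n := le_trans (hcard𝒮 S hS) hKn
      have hpow : p ^ n = p ^ S.card * p ^ (n - S.card) := by
        rw [← pow_add]
        congr 1
        omega
      rw [div_pow, hpow]
      field_simp
    rw [e1]
    have e2 := sum_fiberwise_of_maps_to (g := fun S : Finset (Fin n) => S.card)
      (t := range (K+1))
      (fun S hS => mem_range.mpr (Nat.lt_succ_of_le (hcard𝒮 S hS)))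
      (fun S => q ^ S.card * p ^ (n - S.card))
    rw [← e2]
    apply sum_congr rfl
    intro j hj
    have hjK : j ≤ K := Nat.lt_succ_iff.mp (mem_range.mp hj)
    have hfib : 𝒮.filter (fun S => S.card = j) = (univ : Finset (Fin n)).powersetCard j := by
      rw [powersetCard_eq_filter, h𝒮, filter_filter]
      apply filter_congr
      intro S _
      constructor
      · intro h; exact h.2
      · intro h; exact ⟨by omega, h⟩
    calc ∑ S ∈ 𝒮.filter (fun S => S.card = j), q ^ S.card * p ^ (n - S.card)
        = ∑ S ∈ 𝒮.filter (fun S => S.card = j), q ^ j * p ^ (n - j) := by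
          apply sum_congr rfl
          intro S hS
          have : S.card = j := by
            have := mem_filter.mp hS
            exact this.2
          rw [this]
      _ = ((𝒮.filter (fun S => S.card = j)).card : ℝ) * (q ^ j * p ^ (n - j)) := by
          rw [sum_const, nsmul_eq_mul]
      _ = bb n q j := by
          rw [hfib, card_powersetCard, card_univ, Fintype.card_fin]
          unfold bb
          rw [show (1:ℝ) - q = p from by rw [hq]; ring]
          ring
  have hbin := bin_lower n K q hq0 hq2 hnq hK1 hn2
  rw [← hAH] at hbin
  -- conclude
  have hfinal : 1/A ≤ 8 * p ^ n := by
    rw [div_le_iff₀ hA0]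
    nlinarith [hbin]
  calc Q (fun _ => true) ≤ 1/A := hQle
    _ ≤ 8 * p ^ n := hfinal
    _ ≤ 10 * p ^ n := by nlinarith [hpn0]


set_option maxHeartbeats 800000 in
/-- For even `k` with `n(1-p) ≤ k/2`, any `k`-wise independent distribution with
marginal `p` gives the all-ones vector probability at most `10 pⁿ`. -/
theorem all_ones_bound_large_k (n k : ℕ) (hk : Even k) (p : ℝ) (hp0 : 0 ≤ p) (hp1 : p ≤ 1)
    (hnk : (n : ℝ) * (1 - p) ≤ (k : ℝ) / 2)
    (Q : (Fin n → Bool) → ℝ) (hQ : kwise k p Q) :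
    pr Q (fun x => ∀ i, x i = true) ≤ 10 * p ^ n := by
  obtain ⟨hQ0, hQ1, hQk⟩ := hQ
  have hpn0 : (0:ℝ) ≤ p ^ n := by positivity
  -- rewrite pr as a point mass
  have hprQ : pr Q (fun x => ∀ i, x i = true) = Q (fun _ => true) := by
    have h1 : ∀ x : Fin n → Bool, (∀ i, x i = true) ↔ x = (fun _ => true) := by
      intro x
      constructor
      · intro h; funext i; exact h i
      · intro h i; rw [h]
    unfold pr
    rw [show (fun x : Fin n → Bool => ∀ i, x i = true) = (fun x => x = fun _ => true) from
      funext fun x => propext (h1 x)]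
    rw [Finset.sum_eq_single (fun _ => true)]
    · rw [if_pos rfl]
    · intro b _ hb
      rw [if_neg hb]
    · intro h
      exact absurd (mem_univ _) h
  by_cases hnk' : n ≤ k
  · -- small case : exact computation
    have h := hQk univ (by simpa using hnk') (fun _ => true)
    have heq : pr Q (fun x => ∀ i, x i = true)
        = ∑ x ∈ univ.filter (fun x => ∀ i ∈ (univ : Finset (Fin n)),
            x i = (fun (_ : Fin n) => true) i), Q x := by
      unfold pr
      rw [sum_filter]
      apply sum_congr rfl
      intro x _
      apply AllOnesAux.ite_iff _ (Q x) 0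
      constructor
      · intro hx i _
        exact hx i
      · intro hx i
        exact hx i (mem_univ i)
    have hval : pr Q (fun x => ∀ i, x i = true) = p ^ n := by
      rw [heq]
      calc ∑ x ∈ univ.filter (fun x => ∀ i ∈ (univ : Finset (Fin n)),
            x i = (fun (_ : Fin n) => true) i), Q x
          = ∏ i ∈ (univ : Finset (Fin n)), (if (fun (_ : Fin n) => true) i then p else 1-p) :=
            (AllOnesAux.sum_filter_inst_irrel _ _ _ _).trans h
        _ = p ^ n := by simp
    rw [hval]
    linarith
  · push_neg at hnk'
    have hq0 : (0:ℝ) ≤ 1 - p := by linarith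
    have hkK : k = 2*(k/2) := by
      obtain ⟨r, hr⟩ := hk
      omega
    have hkr : ((k:ℝ))/2 = ((k/2 : ℕ):ℝ) := by
      have : (k:ℝ) = 2*((k/2 : ℕ):ℝ) := by exact_mod_cast hkK
      linarith
    have hnq : (n:ℝ) * (1-p) ≤ ((k/2 : ℕ):ℝ) := by rw [← hkr]; exact hnk
    by_cases hqpos : 1 - p ≤ 0
    · -- p = 1 case
      have hp : p = 1 := by linarith
      have hple : pr Q (fun x => ∀ i, x i = true) ≤ 1 := by
        rw [hprQ, ← hQ1]
        exact single_le_sum (fun x _ => hQ0 x) (mem_univ _)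
      rw [hp]
      norm_num
      linarith
    · push_neg at hqpos
      have hn2 : 2*(k/2) + 1 ≤ n := by omega
      have hK1 : 1 ≤ k/2 := by
        by_contra hcon
        have hK0 : k/2 = 0 := by omega
        rw [hK0] at hnq
        push_cast at hnq
        have hn0 : (0:ℝ) < n := by
          have h1n : (1:ℕ) ≤ n := by omega
          exact_mod_cast Nat.lt_of_lt_of_le Nat.zero_lt_one h1n
        nlinarith [mul_pos hn0 hqpos]
      have hq2 : 1 - p ≤ 1 - (1 - p) := by
        by_contra hcon
        push_neg at hcon
        have hnr : (2*((k/2:ℕ):ℝ)+1) ≤ (n:ℝ) := by exact_mod_cast hn2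
        have h1 : (2*((k/2:ℕ):ℝ)+1)*(1-p) ≤ (n:ℝ)*(1-p) := mul_le_mul_of_nonneg_right hnr hq0
        nlinarith
      have hp2 : (0:ℝ) < p := by linarith
      rw [hprQ]
      apply AllOnesAux.main_hard n (k/2) p (1-p) rfl hp2 hq0 hq2 hnq hK1 hn2 Q hQ0
      intro S hS b
      exact (AllOnesAux.sum_filter_inst_irrel _ _ _ _).trans (hQk S (by omega) b)
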